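/- A betweenness structure B of order n is linear if and only if B is isomorphic to 𝒫_n, or n=4 and B is isomorphic to 𝒞₄. (Up to isomorphism, the linear betweenness structures are exactly 𝒫_n (n≥1) and 𝒞₄.) -/

import Mathlib

open scoped ENNReal

namespace FMS

/-- An (ordered) triple is collinear if one of its points lies between the other two. -/
def CollinearTriple {X : Type*} (btw : X → X → X → Prop) (x y z : X) : Prop :=
  btw x y z ∨ btw y x z ∨ btw x z y

/-- A finite set of points is collinear if it can be enumerated as a collinear triple. -/
def CollinearSet {X : Type*} (btw : X → X → X → Prop) (T : Finset X) : Prop :=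
  ∃ x y z : X, (T : Set X) = {x, y, z} ∧ CollinearTriple btw x y z

/-- A triangle is a 3-element subset of the ground set that is not collinear. -/
def IsTriangle {X : Type*} (btw : X → X → X → Prop) (T : Finset X) : Prop :=
  T.card = 3 ∧ ¬ CollinearSet btw T

/-- The co-size of a betweenness structure: the number of triangles. -/
noncomputable def coSize {X : Type*} (btw : X → X → X → Prop) : ℕ :=
  Set.ncard {T : Finset X | IsTriangle btw T}

/-- The degree of a point: the number of triangles containing it. -/
noncomputable def degB {X : Type*} (btw : X → X → X → Prop) (x : X) : ℕ :=
  Set.ncard {T : Finset X | IsTriangle btw T ∧ x ∈ T}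

/-- A betweenness structure is linear if every 3-element subset is collinear. -/
def Linear {X : Type*} (btw : X → X → X → Prop) : Prop :=
  ∀ T : Finset X, T.card = 3 → CollinearSet btw T

/-- The axioms (P1)-(P4) of (almost-metrizable) betweenness structures. -/
def IsBtw {X : Type*} (btw : X → X → X → Prop) : Prop :=
  (∀ x z : X, btw x x z) ∧
  (∀ x y z : X, btw x y z → btw z y x) ∧
  (∀ x y z : X, btw x y z → btw y x z → x = y) ∧
  (∀ x y z w : X, btw x y z → btw x w y → btw x w z ∧ btw w y z)

/-- Isomorphism of betweenness structures. -/
def BIso {X Y : Type*} (btwX : X → X → X → Prop) (btwY : Y → Y → Y → Prop) : Prop :=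
  ∃ e : X ≃ Y, ∀ x y z : X, btwX x y z ↔ btwY (e x) (e y) (e z)

/-- The cost (length) of a walk, given edge weights `w` (non-edges have weight `⊤`). -/
noncomputable def walkCost {X : Type*} (w : X → X → ℝ≥0∞) : List X → ℝ≥0∞
  | [] => 0
  | [_] => 0
  | a :: b :: l => w a b + walkCost w (b :: l)

/-- Shortest-path distance for the weighted graph with weight function `w`. -/
noncomputable def spDist {X : Type*} (w : X → X → ℝ≥0∞) (x y : X) : ℝ≥0∞ :=
  ⨅ l ∈ {l : List X | l.head? = some x ∧ l.getLast? = some y}, walkCost w l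

/-- The betweenness structure induced by the weighted graph with weight function `w`:
`y` is between `x` and `z` iff `d(x,y) + d(y,z) = d(x,z)` for the shortest-path metric. -/
def metricBtw {X : Type*} (w : X → X → ℝ≥0∞) (x y z : X) : Prop :=
  spDist w x y + spDist w y z = spDist w x z

/-- The ordered betweenness structure `𝒫ₙ` induced by the path `Pₙ`. -/
def pathBtw (n : ℕ) : Fin n → Fin n → Fin n → Prop := fun i j k =>
  (i ≤ j ∧ j ≤ k) ∨ (k ≤ j ∧ j ≤ i)

/-- Unit edge weights of the 4-cycle `C₄`. -/
noncomputable def wC4 : Fin 4 → Fin 4 → ℝ≥0∞ := fun i j =>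
  if (j : ℕ) = ((i : ℕ) + 1) % 4 ∨ (i : ℕ) = ((j : ℕ) + 1) % 4 then 1 else ⊤

/-- Unit edge weights of the complete graph `K₃`. -/
noncomputable def wK3 : Fin 3 → Fin 3 → ℝ≥0∞ := fun i j => if i ≠ j then 1 else ⊤

/-- A betweenness structure is regular if no 4-element subset induces a substructure
isomorphic to `𝒞₄` (no cyclic line). -/
def Regular {X : Type*} (btw : X → X → X → Prop) : Prop :=
  ∀ Y : Set X, ¬ BIso (fun a b c : Y => btw a.1 b.1 c.1) (metricBtw wC4)

/-- A betweenness structure is orderable if it has an ordered extension: there is an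
ordering (injective labeling by naturals) of the points such that every betweenness
relation is compatible with it. -/
def Orderable {X : Type*} (btw : X → X → X → Prop) : Prop :=
  ∃ f : X → ℕ, Function.Injective f ∧
    ∀ x y z : X, btw x y z → (f x ≤ f y ∧ f y ≤ f z) ∨ (f z ≤ f y ∧ f y ≤ f x)

/-- The triangle hypergraph is a Δ-star: at most one edge, or all pairs of distinct
triangles meet in the same kernel `K`. -/
def DeltaStar {X : Type*} (btw : X → X → X → Prop) : Prop :=
  {T : Finset X | IsTriangle btw T}.Subsingleton ∨
  ∃ K : Set X, ∀ E F : Finset X, IsTriangle btw E → IsTriangle btw F → E ≠ F →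
    (E : Set X) ∩ (F : Set X) = K

/-- The triangle hypergraph is a tight star: at most one edge, or all pairs of distinct
triangles meet in the same 2-element kernel `K`. -/
def TightStar {X : Type*} (btw : X → X → X → Prop) : Prop :=
  {T : Finset X | IsTriangle btw T}.Subsingleton ∨
  ∃ K : Set X, K.ncard = 2 ∧ ∀ E F : Finset X, IsTriangle btw E → IsTriangle btw F → E ≠ F →
    (E : Set X) ∩ (F : Set X) = K

/-- A class of betweenness structures is hereditary if it is closed under isomorphism
and under taking induced substructures. -/
def Hereditary (Φ : ∀ X : Type, (X → X → X → Prop) → Prop) : Prop :=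
  (∀ (X Y : Type) (bX : X → X → X → Prop) (bY : Y → Y → Y → Prop),
      BIso bX bY → Φ X bX → Φ Y bY) ∧
  (∀ (X : Type) (bX : X → X → X → Prop) (Y : Set X), Y.Nonempty →
      Φ X bX → Φ Y (fun a b c : Y => bX a.1 b.1 c.1))

/-! Weight functions of the graphs `Q`, `R`, `S`, `T`.
In each of the following, the vertex `Sum.inl a : Fin m ⊕ Bool` is the point
`x_{a+1}` (so `x₁,…,x_m` with `m = n - 2` are `Sum.inl 0, …, Sum.inl (m-1)`),
`Sum.inr false` is `y` and `Sum.inr true` is `z`. The parameter `i` is 1-based,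
as in the paper. Non-edges have weight `⊤`. -/

/-- `Q²ₙ` with `m = n - 2`: path plus edges `{y,x₁}, {z,x₁}, {y,z}`. -/
noncomputable def wQ2 (m : ℕ) : Fin m ⊕ Bool → Fin m ⊕ Bool → ℝ≥0∞
  | Sum.inl a, Sum.inl b => if (a : ℕ) + 1 = (b : ℕ) ∨ (b : ℕ) + 1 = (a : ℕ) then 1 else ⊤
  | Sum.inl a, Sum.inr _ => if (a : ℕ) = 0 then 1 else ⊤
  | Sum.inr _, Sum.inl b => if (b : ℕ) = 0 then 1 else ⊤
  | Sum.inr c, Sum.inr d => if c ≠ d then 1 else ⊤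

/-- `Q³ₙ` with `m = n - 2`: path plus edges `{y,x₁}, {z,x₁}`. -/
noncomputable def wQ3 (m : ℕ) : Fin m ⊕ Bool → Fin m ⊕ Bool → ℝ≥0∞
  | Sum.inl a, Sum.inl b => if (a : ℕ) + 1 = (b : ℕ) ∨ (b : ℕ) + 1 = (a : ℕ) then 1 else ⊤
  | Sum.inl a, Sum.inr _ => if (a : ℕ) = 0 then 1 else ⊤
  | Sum.inr _, Sum.inl b => if (b : ℕ) = 0 then 1 else ⊤
  | Sum.inr _, Sum.inr _ => ⊤

/-- `R²ₙ,ᵢ` with `m = n - 2`: path with edge `{xᵢ, xᵢ₊₁}` deleted, plus unit edges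
`{y,xᵢ}, {z,xᵢ}, {y,xᵢ₊₁}, {z,xᵢ₊₁}, {y,z}`. -/
noncomputable def wR2 (m i : ℕ) : Fin m ⊕ Bool → Fin m ⊕ Bool → ℝ≥0∞
  | Sum.inl a, Sum.inl b =>
      if ((a : ℕ) + 1 = (b : ℕ) ∧ (a : ℕ) + 1 ≠ i) ∨
         ((b : ℕ) + 1 = (a : ℕ) ∧ (b : ℕ) + 1 ≠ i) then 1 else ⊤
  | Sum.inl a, Sum.inr _ => if (a : ℕ) + 1 = i ∨ (a : ℕ) = i then 1 else ⊤
  | Sum.inr _, Sum.inl b => if (b : ℕ) + 1 = i ∨ (b : ℕ) = i then 1 else ⊤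
  | Sum.inr c, Sum.inr d => if c ≠ d then 1 else ⊤

/-- `R³ₙ,ᵢ` with `m = n - 2`: path with edge `{xᵢ, xᵢ₊₁}` deleted, plus unit edges
`{y,xᵢ}, {z,xᵢ}` and weight-2 edges `{y,xᵢ₊₁}, {z,xᵢ₊₁}`. -/
noncomputable def wR3 (m i : ℕ) : Fin m ⊕ Bool → Fin m ⊕ Bool → ℝ≥0∞
  | Sum.inl a, Sum.inl b =>
      if ((a : ℕ) + 1 = (b : ℕ) ∧ (a : ℕ) + 1 ≠ i) ∨
         ((b : ℕ) + 1 = (a : ℕ) ∧ (b : ℕ) + 1 ≠ i) then 1 else ⊤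
  | Sum.inl a, Sum.inr _ => if (a : ℕ) + 1 = i then 1 else if (a : ℕ) = i then 2 else ⊤
  | Sum.inr _, Sum.inl b => if (b : ℕ) + 1 = i then 1 else if (b : ℕ) = i then 2 else ⊤
  | Sum.inr _, Sum.inr _ => ⊤

/-- `R⁴ₙ,ᵢ` with `m = n - 2`: path with edge `{xᵢ, xᵢ₊₁}` deleted, plus unit edges
`{y,xᵢ}, {z,xᵢ}, {y,xᵢ₊₁}, {z,xᵢ₊₁}`. -/
noncomputable def wR4 (m i : ℕ) : Fin m ⊕ Bool → Fin m ⊕ Bool → ℝ≥0∞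
  | Sum.inl a, Sum.inl b =>
      if ((a : ℕ) + 1 = (b : ℕ) ∧ (a : ℕ) + 1 ≠ i) ∨
         ((b : ℕ) + 1 = (a : ℕ) ∧ (b : ℕ) + 1 ≠ i) then 1 else ⊤
  | Sum.inl a, Sum.inr _ => if (a : ℕ) + 1 = i ∨ (a : ℕ) = i then 1 else ⊤
  | Sum.inr _, Sum.inl b => if (b : ℕ) + 1 = i ∨ (b : ℕ) = i then 1 else ⊤
  | Sum.inr _, Sum.inr _ => ⊤

/-- `S²ₙ` with `m = n - 2`: path plus unit edges `{x₁,y}, {x_m,z}` and an edge `{y,z}`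
of weight `n - 2 = m`. -/
noncomputable def wS2 (m : ℕ) : Fin m ⊕ Bool → Fin m ⊕ Bool → ℝ≥0∞
  | Sum.inl a, Sum.inl b => if (a : ℕ) + 1 = (b : ℕ) ∨ (b : ℕ) + 1 = (a : ℕ) then 1 else ⊤
  | Sum.inl a, Sum.inr c =>
      if (c = false ∧ (a : ℕ) = 0) ∨ (c = true ∧ (a : ℕ) = m - 1) then 1 else ⊤
  | Sum.inr c, Sum.inl b =>
      if (c = false ∧ (b : ℕ) = 0) ∨ (c = true ∧ (b : ℕ) = m - 1) then 1 else ⊤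
  | Sum.inr c, Sum.inr d => if c ≠ d then (m : ℝ≥0∞) else ⊤

/-- `S³ₙ` with `m = n - 2`: path plus a unit edge `{x₁,y}`, a weight-2 edge `{x_m,z}`
and an edge `{y,z}` of weight `n - 2 = m`. -/
noncomputable def wS3 (m : ℕ) : Fin m ⊕ Bool → Fin m ⊕ Bool → ℝ≥0∞
  | Sum.inl a, Sum.inl b => if (a : ℕ) + 1 = (b : ℕ) ∨ (b : ℕ) + 1 = (a : ℕ) then 1 else ⊤
  | Sum.inl a, Sum.inr c =>
      if c = false ∧ (a : ℕ) = 0 then 1 else if c = true ∧ (a : ℕ) = m - 1 then 2 else ⊤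
  | Sum.inr c, Sum.inl b =>
      if c = false ∧ (b : ℕ) = 0 then 1 else if c = true ∧ (b : ℕ) = m - 1 then 2 else ⊤
  | Sum.inr c, Sum.inr d => if c ≠ d then (m : ℝ≥0∞) else ⊤

/-- `S⁴ₙ` with `m = n - 2`: path plus unit edges `{x₁,y}, {x_m,z}` and an edge `{y,z}`
of weight `n - 3 = m - 1`. -/
noncomputable def wS4 (m : ℕ) : Fin m ⊕ Bool → Fin m ⊕ Bool → ℝ≥0∞
  | Sum.inl a, Sum.inl b => if (a : ℕ) + 1 = (b : ℕ) ∨ (b : ℕ) + 1 = (a : ℕ) then 1 else ⊤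
  | Sum.inl a, Sum.inr c =>
      if (c = false ∧ (a : ℕ) = 0) ∨ (c = true ∧ (a : ℕ) = m - 1) then 1 else ⊤
  | Sum.inr c, Sum.inl b =>
      if (c = false ∧ (b : ℕ) = 0) ∨ (c = true ∧ (b : ℕ) = m - 1) then 1 else ⊤
  | Sum.inr c, Sum.inr d => if c ≠ d then ((m - 1 : ℕ) : ℝ≥0∞) else ⊤

/-- `Tₙ,ᵢ` with `m = n - 4`; the vertices `Sum.inl a` are the points `x_{a+1}`, and
`Sum.inr 0, Sum.inr 1, Sum.inr 2, Sum.inr 3` are `y, z, u, v` respectively. All edges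
have unit weight: the path edges `{x_j, x_{j+1}}` (`1 ≤ j ≤ n-5`, `j ≠ i`) together with
`{xᵢ,y}, {xᵢ,z}, {y,u}, {y,v}, {z,u}, {z,v}, {u,xᵢ₊₁}, {v,xᵢ₊₁}`. -/
noncomputable def wT (m i : ℕ) : Fin m ⊕ Fin 4 → Fin m ⊕ Fin 4 → ℝ≥0∞
  | Sum.inl a, Sum.inl b =>
      if ((a : ℕ) + 1 = (b : ℕ) ∧ (a : ℕ) + 1 ≠ i) ∨
         ((b : ℕ) + 1 = (a : ℕ) ∧ (b : ℕ) + 1 ≠ i) then 1 else ⊤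
  | Sum.inl a, Sum.inr c =>
      if ((a : ℕ) + 1 = i ∧ (c : ℕ) ≤ 1) ∨ ((a : ℕ) = i ∧ 2 ≤ (c : ℕ)) then 1 else ⊤
  | Sum.inr c, Sum.inl b =>
      if ((b : ℕ) + 1 = i ∧ (c : ℕ) ≤ 1) ∨ ((b : ℕ) = i ∧ 2 ≤ (c : ℕ)) then 1 else ⊤
  | Sum.inr c, Sum.inr d =>
      if ((c : ℕ) ≤ 1 ∧ 2 ≤ (d : ℕ)) ∨ ((d : ℕ) ≤ 1 ∧ 2 ≤ (c : ℕ)) then 1 else ⊤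


/-! ### Auxiliary material for `stmt0` -/

section BtwBasic
variable {X : Type*} {btw : X → X → X → Prop} (hB : IsBtw btw)
include hB

lemma bP1 (x z : X) : btw x x z := hB.1 x z
lemma bP2 {x y z : X} (h : btw x y z) : btw z y x := hB.2.1 x y z h
lemma bP3 {x y z : X} (h : btw x y z) (h' : btw y x z) : x = y := hB.2.2.1 x y z h h'
lemma bP4 {x y z w : X} (h : btw x y z) (h' : btw x w y) : btw x w z ∧ btw w y z :=
  hB.2.2.2 x y z w h h'
lemma bxyy (x y : X) : btw x y y := bP2 hB (bP1 hB y x)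
lemma bxyx {x y : X} (h : btw x y x) : x = y := bP3 hB h (bxyy hB y x)
lemma bL24 {x y z w : X} (h : btw x y z) (h' : btw y w z) : btw x y w ∧ btw x w z := by
  have := bP4 hB (bP2 hB h) (bP2 hB h')
  exact ⟨bP2 hB this.2, bP2 hB this.1⟩
lemma uniq1 {x y z : X} (h : btw x y z) (h' : btw x z y) : y = z :=
  (bxyx hB (bP4 hB h h').2).symm

end BtwBasic

section Perm
variable {X : Type*} {btw : X → X → X → Prop}

lemma col_swap12 (hsym : ∀ x y z : X, btw x y z → btw z y x) {x y z : X}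
    (h : CollinearTriple btw x y z) : CollinearTriple btw y x z := by
  rcases h with h | h | h
  · exact Or.inr (Or.inl h)
  · exact Or.inl h
  · exact Or.inr (Or.inr (hsym _ _ _ h))

lemma col_swap23 (hsym : ∀ x y z : X, btw x y z → btw z y x) {x y z : X}
    (h : CollinearTriple btw x y z) : CollinearTriple btw x z y := by
  rcases h with h | h | h
  · exact Or.inr (Or.inr h)
  · exact Or.inr (Or.inl (hsym _ _ _ h))
  · exact Or.inl h

lemma col_perm (hsym : ∀ x y z : X, btw x y z → btw z y x) {x y z : X}
    (h : CollinearTriple btw x y z) :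
    CollinearTriple btw x y z ∧ CollinearTriple btw y x z ∧ CollinearTriple btw x z y ∧
    CollinearTriple btw y z x ∧ CollinearTriple btw z x y ∧ CollinearTriple btw z y x := by
  refine ⟨h, col_swap12 hsym h, col_swap23 hsym h, ?_, ?_, ?_⟩
  · exact col_swap23 hsym (col_swap12 hsym h)
  · exact col_swap12 hsym (col_swap23 hsym h)
  · exact col_swap23 hsym (col_swap12 hsym (col_swap23 hsym h))

lemma tri_of_linear (hsym : ∀ x y z : X, btw x y z → btw z y x) (hlin : Linear btw)
    {x y z : X} (hxy : x ≠ y) (hxz : x ≠ z) (hyz : y ≠ z) :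
    CollinearTriple btw x y z := by
  classical
  have hcard : ({x, y, z} : Finset X).card = 3 := by
    rw [Finset.card_insert_of_notMem (by simp [hxy, hxz]),
      Finset.card_insert_of_notMem (by simp [hyz]), Finset.card_singleton]
  obtain ⟨a, b, c, hset, hcol⟩ := hlin {x, y, z} hcard
  have hset' : ({x, y, z} : Set X) = {a, b, c} := by rw [← hset]; simp
  have hx : x = a ∨ x = b ∨ x = c := by
    have : x ∈ ({a, b, c} : Set X) := hset' ▸ (by simp)
    simpa using this
  have hy : y = a ∨ y = b ∨ y = c := by
    have : y ∈ ({a, b, c} : Set X) := hset' ▸ (by simp)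
    simpa using this
  have hz : z = a ∨ z = b ∨ z = c := by
    have : z ∈ ({a, b, c} : Set X) := hset' ▸ (by simp)
    simpa using this
  obtain ⟨c1, c2, c3, c4, c5, c6⟩ := col_perm hsym hcol
  rcases hx with rfl | rfl | rfl <;> rcases hy with rfl | rfl | rfl <;>
    rcases hz with rfl | rfl | rfl <;>
    first
      | exact absurd rfl hxy
      | exact absurd rfl hxz
      | exact absurd rfl hyz
      | assumption

end Perm

lemma linear_of_biso {X Y : Type*} {btwX : X → X → X → Prop} {btwY : Y → Y → Y → Prop}
    (h : BIso btwX btwY) (hlin : Linear btwY) : Linear btwX := by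
  classical
  obtain ⟨e, he⟩ := h
  intro T hT
  have hT' : (T.image e).card = 3 := by
    rw [Finset.card_image_of_injective _ e.injective, hT]
  obtain ⟨x, y, z, hset, hcol⟩ := hlin (T.image e) hT'
  refine ⟨e.symm x, e.symm y, e.symm z, ?_, ?_⟩
  · have : (T : Set X) = e.symm '' {x, y, z} := by
      rw [← hset]
      simp only [Finset.coe_image]
      rw [Set.image_image]
      simp
    rw [this, Set.image_insert_eq, Set.image_insert_eq, Set.image_singleton]
  · unfold CollinearTriple at hcol ⊢
    simp only [he, e.apply_symm_apply]
    exact hcol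

lemma linear_pathBtw (n : ℕ) : Linear (pathBtw n) := by
  intro T hT
  obtain ⟨x, y, z, hxy, hxz, hyz, rfl⟩ := Finset.card_eq_three.mp hT
  refine ⟨x, y, z, by simp, ?_⟩
  unfold CollinearTriple pathBtw
  rcases le_total x y with h1 | h1 <;> rcases le_total y z with h2 | h2 <;>
    rcases le_total x z with h3 | h3 <;> tauto

/-! ### The shortest-path metric of `C₄` -/

/-- The graph distance of `C₄`, as a natural number. -/
def dC4 : Fin 4 → Fin 4 → ℕ := fun i j =>
  min ((i.val + 4 - j.val) % 4) ((j.val + 4 - i.val) % 4)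

/-- Combinatorial description of the betweenness of `C₄`. -/
def btwN (i j k : Fin 4) : Prop := dC4 i j + dC4 j k = dC4 i k

instance (i j k : Fin 4) : Decidable (btwN i j k) := by unfold btwN; infer_instance

lemma le_walkCost {X : Type*} (w : X → X → ℝ≥0∞) (d : X → X → ℝ≥0∞)
    (h0 : ∀ x, d x x = 0) (htri : ∀ x y z, d x z ≤ w x y + d y z) :
    ∀ (l : List X) (x y : X), l.head? = some x → l.getLast? = some y →
      d x y ≤ walkCost w l := by
  intro l
  induction l with
  | nil => intro x y h _; simp at h
  | cons a t ih =>
    intro x y hh hg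
    simp at hh; subst hh
    cases t with
    | nil =>
      simp [List.getLast?] at hg; subst hg; simp [walkCost, h0]
    | cons b t' =>
      rw [List.getLast?_cons_cons] at hg
      calc d a y ≤ w a b + d b y := htri a b y
        _ ≤ w a b + walkCost w (b :: t') := by gcongr; exact ih b y rfl hg
        _ = walkCost w (a :: b :: t') := rfl

lemma spDist_le {X : Type*} (w : X → X → ℝ≥0∞) {x y : X} (l : List X)
    (hh : l.head? = some x) (hg : l.getLast? = some y) :
    spDist w x y ≤ walkCost w l :=
  iInf₂_le l ⟨hh, hg⟩

lemma le_spDist {X : Type*} (w : X → X → ℝ≥0∞) (d : X → X → ℝ≥0∞)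
    (h0 : ∀ x, d x x = 0) (htri : ∀ x y z, d x z ≤ w x y + d y z) (x y : X) :
    d x y ≤ spDist w x y :=
  le_iInf₂ fun l hl => le_walkCost w d h0 htri l x y hl.1 hl.2

set_option linter.unusedTactic false in
lemma spDistC4 (x y : Fin 4) : spDist wC4 x y = (dC4 x y : ℝ≥0∞) := by
  apply le_antisymm
  · fin_cases x <;> fin_cases y
    all_goals first
    | (refine le_trans (spDist_le wC4 [_] rfl rfl) ?_; norm_num [walkCost, dC4]; done)
    | (refine le_trans (spDist_le wC4 [_, _] rfl rfl) ?_; norm_num [walkCost, wC4, dC4]; done)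
    | (refine le_trans (spDist_le wC4 [⟨0, by norm_num⟩, ⟨1, by norm_num⟩, ⟨2, by norm_num⟩] rfl rfl) ?_;
        norm_num [walkCost, wC4, dC4]; done)
    | (refine le_trans (spDist_le wC4 [⟨2, by norm_num⟩, ⟨1, by norm_num⟩, ⟨0, by norm_num⟩] rfl rfl) ?_;
        norm_num [walkCost, wC4, dC4]; done)
    | (refine le_trans (spDist_le wC4 [⟨1, by norm_num⟩, ⟨2, by norm_num⟩, ⟨3, by norm_num⟩] rfl rfl) ?_;
        norm_num [walkCost, wC4, dC4]; done)
    | (refine le_trans (spDist_le wC4 [⟨3, by norm_num⟩, ⟨2, by norm_num⟩, ⟨1, by norm_num⟩] rfl rfl) ?_;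
        norm_num [walkCost, wC4, dC4]; done)
  · apply le_spDist
    · intro x; norm_num [dC4]
    · intro x y z
      unfold wC4
      by_cases h : (y : ℕ) = ((x : ℕ) + 1) % 4 ∨ (x : ℕ) = ((y : ℕ) + 1) % 4
      · rw [if_pos h]
        have hn : dC4 x z ≤ 1 + dC4 y z := by revert h; revert x y z; decide
        calc (dC4 x z : ℝ≥0∞) ≤ ((1 + dC4 y z : ℕ) : ℝ≥0∞) := by exact_mod_cast hn
          _ = 1 + (dC4 y z : ℝ≥0∞) := by push_cast; ring
      · rw [if_neg h]; simp

lemma metricBtw_iff (i j k : Fin 4) : metricBtw wC4 i j k ↔ btwN i j k := by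
  unfold metricBtw btwN
  rw [spDistC4, spDistC4, spDistC4, ← Nat.cast_add, Nat.cast_inj]

lemma linear_C4 : Linear (metricBtw wC4) := by
  intro T hT
  obtain ⟨x, y, z, hxy, hxz, hyz, rfl⟩ := Finset.card_eq_three.mp hT
  refine ⟨x, y, z, by simp, ?_⟩
  unfold CollinearTriple
  simp only [metricBtw_iff]
  have : ∀ x y z : Fin 4, x ≠ y → x ≠ z → y ≠ z → (btwN x y z ∨ btwN y x z ∨ btwN x z y) := by
    decide
  exact this x y z hxy hxz hyz

section Classification
variable {X : Type*} {btw : X → X → X → Prop} (hB : IsBtw btw)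
  (tri : ∀ x y z : X, x ≠ y → x ≠ z → y ≠ z → btw x y z ∨ btw y x z ∨ btw x z y)
include hB

lemma auxA3 {a b c d e : X} (hed : e ≠ d)
    (h2 : btw a d c) (h3 : btw b a d) (h4 : btw b c d) (hbce : btw b c e)
    (hc : btw a e d) : False := by
  have hedc : btw e d c := (bP4 hB h2 hc).2
  have hbed : btw b e d := bP2 hB (bP4 hB (bP2 hB h3) (bP2 hB hc)).1
  have hced : btw c e d := (bP4 hB hbed hbce).2
  exact hed (uniq1 hB hced (bP2 hB hedc))

include tri in
lemma noFifth {a b c d e : X}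
    (hab : a ≠ b) (hac : a ≠ c) (had : a ≠ d) (hbc : b ≠ c) (hbd : b ≠ d) (hcd : c ≠ d)
    (hea : e ≠ a) (heb : e ≠ b) (hec : e ≠ c) (hed : e ≠ d)
    (h1 : btw a b c) (h2 : btw a d c) (h3 : btw b a d) (h4 : btw b c d) : False := by
  rcases tri a e c hea.symm hac hec with hA | hC | hB2
  · -- btw a e c
    rcases tri a b e hab hea.symm heb.symm with hab_e | hbae | haeb
    · -- btw a b e
      have hbec : btw b e c := (bP4 hB hA hab_e).2
      have hbed : btw b e d := (bP4 hB h4 hbec).1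
      have hecd : btw e c d := (bP4 hB h4 hbec).2
      rcases tri a d e had hea.symm hed.symm with hade | hdae | haed
      · exact hec (uniq1 hB hA (bP2 hB (bP4 hB (bP2 hB hade) hecd).1))
      · exact heb ((uniq1 hB hab_e (bP4 hB (bP2 hB hbed) hdae).2).symm)
      · exact hab (bP3 hB hab_e (bL24 hB h3 haed).1)
    · -- btw b a e
      have hbce : btw b c e := by
        rcases tri b c e hbc heb.symm hec.symm with h | h | h
        · exact h
        · exact (hea ((uniq1 hB hbae (bP4 hB (bP2 hB hA) h).2).symm)).elim
        · exact (hab (bP3 hB (bL24 hB h1 h).1 hbae)).elim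
      rcases tri a e d hea.symm had hed with h | h | h
      · exact auxA3 hB hed h2 h3 h4 hbce h
      · -- btw e a d
        have hecd : btw e c d := by
          rcases tri e c d hec hed hcd with h' | h' | h'
          · exact h'
          · exact (had (uniq1 hB h (bP4 hB (bP2 hB h2) h').2)).elim
          · exact (hea.symm (bP3 hB (bL24 hB hA h').1 h)).elim
        rcases tri b e d heb.symm hbd hed with h' | h' | h'
        · exact hea.symm (bP3 hB (bP4 hB h' hbae).2 h)
        · exact hab (bP3 hB (bP4 hB h' (bP2 hB hbae)).2 h3)
        · exact had (bP3 hB (bP4 hB h' h3).2 (bP2 hB h))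
      · exact auxA3 hB hed.symm hA hbae hbce h4 h
    · -- btw a e b
      have hebc : btw e b c := (bP4 hB h1 haeb).2
      have hdae : btw d a e := (bL24 hB (bP2 hB h3) haeb).1
      have hdeb : btw d e b := (bL24 hB (bP2 hB h3) haeb).2
      have hcbe : btw c b e := bP2 hB hebc
      have hcde : btw c d e := by
        rcases tri c d e hcd hec.symm hed.symm with h' | h' | h'
        · exact h'
        · exact (heb ((uniq1 hB hcbe (bP4 hB hdeb h').2).symm)).elim
        · exact (hbc (bP3 hB (bL24 hB h4 h').1 hcbe)).elim
      exact hea ((bP3 hB hA (bP2 hB (bL24 hB hcde hdae).2)).symm)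
  · -- btw e a c
    have hbae : btw b a e := (bP4 hB (bP2 hB hC) (bP2 hB h1)).2
    have hdae : btw d a e := (bP4 hB (bP2 hB hC) (bP2 hB h2)).2
    rcases tri b e d heb.symm hbd hed with h' | h' | h'
    · exact hea.symm (bP3 hB (bP4 hB h' hbae).2 (bP2 hB hdae))
    · exact hab (bP3 hB (bP4 hB h' (bP2 hB hbae)).2 h3)
    · exact had (bP3 hB (bP4 hB h' h3).2 hdae)
  · -- btw a c e
    have habe : btw a b e := (bP4 hB hB2 h1).1
    have hbce : btw b c e := (bP4 hB hB2 h1).2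
    have hade : btw a d e := (bP4 hB hB2 h2).1
    have hdce : btw d c e := (bP4 hB hB2 h2).2
    have hbed : btw b e d := by
      rcases tri b e d heb.symm hbd hed with h' | h' | h'
      · exact h'
      · exact (had (uniq1 hB h3 (bP4 hB (bP2 hB hade) h').2)).elim
      · exact (hab (bP3 hB (bL24 hB habe h').1 h3)).elim
    exact hec.symm (bP3 hB (bP4 hB hbed hbce).2 (bP2 hB hdce))

end Classification

lemma c4_branch {X : Type*} [Fintype X] {n : ℕ} (hcard : Fintype.card X = n)
    {btw : X → X → X → Prop} (hB : IsBtw btw)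
    (tri : ∀ x y z : X, x ≠ y → x ≠ z → y ≠ z → btw x y z ∨ btw y x z ∨ btw x z y)
    {a b c d : X}
    (hab : a ≠ b) (hac : a ≠ c) (had : a ≠ d) (hbc : b ≠ c) (hbd : b ≠ d) (hcd : c ≠ d)
    (h1 : btw a b c) (h2 : btw a d c) (h3 : btw b a d) :
    n = 4 ∧ BIso btw (metricBtw wC4) := by
  classical
  have h4 : btw b c d := by
    rcases tri b c d hbc hbd hcd with h | h | h
    · exact h
    · exact (had (uniq1 hB h3 (bP4 hB (bP2 hB h2) h).2)).elim
    · exact (hab.symm (bP3 hB h3 (bL24 hB h1 h).1)).elim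
  have hall : ∀ e : X, e = a ∨ e = b ∨ e = c ∨ e = d := by
    intro e; by_contra h; push_neg at h
    exact noFifth hB tri hab hac had hbc hbd hcd h.1 h.2.1 h.2.2.1 h.2.2.2 h1 h2 h3 h4
  have huniv : ({a, b, c, d} : Finset X) = Finset.univ :=
    Finset.eq_univ_iff_forall.mpr (fun e => by rcases hall e with rfl | rfl | rfl | rfl <;> simp)
  have hn : n = 4 := by
    rw [← hcard, ← Finset.card_univ, ← huniv,
      Finset.card_insert_of_notMem (by simp [hab, hac, had]),
      Finset.card_insert_of_notMem (by simp [hbc, hbd]),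
      Finset.card_insert_of_notMem (by simp [hcd]), Finset.card_singleton]
  refine ⟨hn, ?_⟩
  obtain ⟨e, hea, heb, hec, hed⟩ :
      ∃ e : X ≃ Fin 4, e a = 0 ∧ e b = 1 ∧ e c = 2 ∧ e d = 3 := by
    refine ⟨{ toFun := fun x => if x = a then 0 else if x = b then 1 else if x = c then 2 else 3
              invFun := fun i => if i = 0 then a else if i = 1 then b else if i = 2 then c else d
              left_inv := ?_, right_inv := ?_ }, ?_, ?_, ?_, ?_⟩
    · intro x
      rcases hall x with rfl | rfl | rfl | rfl <;>
        simp [hab, hac, had, hbc, hbd, hcd,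
          Ne.symm hab, Ne.symm hac, Ne.symm had, Ne.symm hbc, Ne.symm hbd, Ne.symm hcd]
    · intro i
      fin_cases i <;>
        simp [hab, hac, had, hbc, hbd, hcd,
          Ne.symm hab, Ne.symm hac, Ne.symm had, Ne.symm hbc, Ne.symm hbd, Ne.symm hcd]
    · simp
    · simp [Ne.symm hab]
    · simp [Ne.symm hac, Ne.symm hbc]
    · simp [Ne.symm had, Ne.symm hbd, Ne.symm hcd]
  -- the full table of the betweenness relation on {a, b, c, d}
  have t1 : btw c b a := bP2 hB h1
  have t2 : btw c d a := bP2 hB h2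
  have t3 : btw d a b := bP2 hB h3
  have t4 : btw d c b := bP2 hB h4
  have n1 : ¬ btw b a c := fun h => hab (bP3 hB h1 h)
  have n2 : ¬ btw a c b := fun h => hbc (uniq1 hB h1 h)
  have n3 : ¬ btw c a b := fun h => n1 (bP2 hB h)
  have n4 : ¬ btw b c a := fun h => n2 (bP2 hB h)
  have n5 : ¬ btw d a c := fun h => had (bP3 hB h2 h)
  have n6 : ¬ btw a c d := fun h => hcd (uniq1 hB h2 h).symm
  have n7 : ¬ btw c a d := fun h => n5 (bP2 hB h)
  have n8 : ¬ btw d c a := fun h => n6 (bP2 hB h)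
  have n9 : ¬ btw a b d := fun h => hab (bP3 hB h h3)
  have n10 : ¬ btw b d a := fun h => had (uniq1 hB h3 h)
  have n11 : ¬ btw d b a := fun h => n9 (bP2 hB h)
  have n12 : ¬ btw a d b := fun h => n10 (bP2 hB h)
  have n13 : ¬ btw c b d := fun h => hbc (bP3 hB h4 h)
  have n14 : ¬ btw b d c := fun h => hcd (uniq1 hB h4 h)
  have n15 : ¬ btw d b c := fun h => n13 (bP2 hB h)
  have n16 : ¬ btw c d b := fun h => n14 (bP2 hB h)
  have m1 : ¬ btw a b a := fun h => hab (bxyx hB h)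
  have m2 : ¬ btw b a b := fun h => hab (bxyx hB h).symm
  have m3 : ¬ btw a c a := fun h => hac (bxyx hB h)
  have m4 : ¬ btw c a c := fun h => hac (bxyx hB h).symm
  have m5 : ¬ btw a d a := fun h => had (bxyx hB h)
  have m6 : ¬ btw d a d := fun h => had (bxyx hB h).symm
  have m7 : ¬ btw b c b := fun h => hbc (bxyx hB h)
  have m8 : ¬ btw c b c := fun h => hbc (bxyx hB h).symm
  have m9 : ¬ btw b d b := fun h => hbd (bxyx hB h)
  have m10 : ¬ btw d b d := fun h => hbd (bxyx hB h).symm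
  have m11 : ¬ btw c d c := fun h => hcd (bxyx hB h)
  have m12 : ¬ btw d c d := fun h => hcd (bxyx hB h).symm
  refine ⟨e, fun x y z => ?_⟩
  rcases hall x with rfl | rfl | rfl | rfl <;> rcases hall y with rfl | rfl | rfl | rfl <;>
    rcases hall z with rfl | rfl | rfl | rfl <;>
    rw [metricBtw_iff] <;>
    simp only [hea, heb, hec, hed] <;>
    first
    | exact iff_of_true (by first | exact bP1 hB _ _ | exact bxyy hB _ _ | assumption) (by decide)
    | exact iff_of_false (by assumption) (by decide)

lemma order_branch {X : Type*} [Fintype X] [Nonempty X] {n : ℕ} (hcard : Fintype.card X = n)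
    {btw : X → X → X → Prop} (hB : IsBtw btw)
    (tri : ∀ x y z : X, x ≠ y → x ≠ z → y ≠ z → btw x y z ∨ btw y x z ∨ btw x z y)
    (hconf : ¬ ∃ a b c d : X, a ≠ b ∧ a ≠ c ∧ a ≠ d ∧ b ≠ c ∧ b ≠ d ∧ c ≠ d ∧
      btw a b c ∧ btw a d c ∧ btw b a d) :
    BIso btw (pathBtw n) := by
  classical
  by_cases hsub : ∀ x y : X, x = y
  · refine ⟨Fintype.equivFinOfCardEq hcard, fun x y z => ?_⟩
    have hxy : x = y := hsub x y
    have hxz : x = z := hsub x z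
    subst hxy; subst hxz
    exact iff_of_true (bP1 hB x x) (Or.inl ⟨le_refl _, le_refl _⟩)
  · push_neg at hsub
    obtain ⟨p₀, q₀, hpq₀⟩ := hsub
    set S : X → X → Finset X :=
      fun u v => Finset.univ.filter (fun x => x ≠ u ∧ x ≠ v ∧ btw u x v) with hS
    obtain ⟨⟨p, q⟩, hpqmem, hmax⟩ := Finset.exists_max_image
      (Finset.univ.filter (fun pq : X × X => pq.1 ≠ pq.2)) (fun pq => (S pq.1 pq.2).card)
      ⟨(p₀, q₀), by simp [hpq₀]⟩
    have hpq : p ≠ q := by simpa using hpqmem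
    have hdiam : ∀ x : X, x ≠ p → x ≠ q → btw p x q := by
      intro x hxp hxq
      by_contra hnb
      rcases tri p x q (Ne.symm hxp) hpq hxq with h | h | h
      · exact hnb h
      · -- btw x p q
        have hsub2 : insert p (S p q) ⊆ S x q := by
          intro y hy
          rw [Finset.mem_insert] at hy
          simp only [hS, Finset.mem_filter, Finset.mem_univ, true_and] at hy ⊢
          rcases hy with rfl | ⟨hyp, hyq, hb⟩
          · exact ⟨Ne.symm hxp, hpq, h⟩
          · refine ⟨?_, hyq, (bL24 hB h hb).2⟩
            rintro rfl; exact hnb hb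
        have hlt : (S p q).card < (S x q).card := by
          have hnm : p ∉ S p q := by simp [hS]
          calc (S p q).card < (insert p (S p q)).card := by
                rw [Finset.card_insert_of_notMem hnm]; omega
            _ ≤ (S x q).card := Finset.card_le_card hsub2
        have hle := hmax (x, q) (by simpa using hxq)
        simp only at hle
        omega
      · -- btw p q x
        have hsub2 : insert q (S p q) ⊆ S p x := by
          intro y hy
          rw [Finset.mem_insert] at hy
          simp only [hS, Finset.mem_filter, Finset.mem_univ, true_and] at hy ⊢
          rcases hy with rfl | ⟨hyp, hyq, hb⟩
          · exact ⟨hpq.symm, Ne.symm hxq, h⟩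
          · refine ⟨hyp, ?_, (bP4 hB h hb).1⟩
            rintro rfl; exact hnb hb
        have hlt : (S p q).card < (S p x).card := by
          have hnm : q ∉ S p q := by simp [hS]
          calc (S p q).card < (insert q (S p q)).card := by
                rw [Finset.card_insert_of_notMem hnm]; omega
            _ ≤ (S p x).card := Finset.card_le_card hsub2
        have hle := hmax (p, x) (by simpa using Ne.symm hxp)
        simp only at hle
        omega
    letI : LinearOrder X :=
      { le := fun u v => btw p u v
        le_refl := fun u => bxyy hB p u
        le_trans := fun u v w huv hvw => (bP4 hB hvw huv).1
        le_antisymm := fun u v huv hvu => bP3 hB (bP2 hB hvu) (bP2 hB huv)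
        le_total := by
          intro u v
          by_cases huv : u = v
          · exact Or.inl (by rw [huv]; exact bxyy hB p v)
          by_cases hup : u = p
          · exact Or.inl (by rw [hup]; exact bP1 hB p v)
          by_cases hvp : v = p
          · exact Or.inr (by rw [hvp]; exact bP1 hB p u)
          by_cases huq : u = q
          · refine Or.inr ?_
            have hvq : v ≠ q := fun hvq => huv (by rw [huq, hvq])
            rw [huq]; exact hdiam v hvp hvq
          by_cases hvq : v = q
          · exact Or.inl (by rw [hvq]; exact hdiam u hup huq)
          rcases tri p u v (Ne.symm hup) (Ne.symm hvp) huv with h | h | h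
          · exact Or.inl h
          · exact absurd ⟨p, u, q, v, Ne.symm hup, hpq, Ne.symm hvp, huq, huv, Ne.symm hvq,
              hdiam u hup huq, hdiam v hvp hvq, h⟩ hconf
          · exact Or.inr h
        toDecidableLE := fun _ _ => Classical.propDecidable _ }
    have hchar : ∀ x y z : X, btw x y z ↔ ((x ≤ y ∧ y ≤ z) ∨ (z ≤ y ∧ y ≤ x)) := by
      intro x y z
      constructor
      · intro h
        rcases le_total x z with hxz | hzx
        · exact Or.inl ⟨(bL24 hB hxz h).1, (bL24 hB hxz h).2⟩
        · exact Or.inr ⟨(bL24 hB hzx (bP2 hB h)).1, (bL24 hB hzx (bP2 hB h)).2⟩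
      · rintro (⟨h1', h2'⟩ | ⟨h1', h2'⟩)
        · exact (bP4 hB h2' h1').2
        · exact bP2 hB (bP4 hB h2' h1').2
    let e := (monoEquivOfFin X hcard).symm
    refine ⟨e.toEquiv, fun x y z => ?_⟩
    show btw x y z ↔ pathBtw n (e x) (e y) (e z)
    rw [hchar]
    unfold pathBtw
    simp only [e.le_iff_le]


/-- A betweenness structure of order `n` is linear iff it is isomorphic
to `𝒫ₙ`, or `n = 4` and it is isomorphic to `𝒞₄`. -/
theorem stmt0 {X : Type} [Fintype X] [Nonempty X] {n : ℕ}
    (hcard : Fintype.card X = n) (btw : X → X → X → Prop) (hB : IsBtw btw) :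
    Linear btw ↔
      (BIso btw (pathBtw n) ∨ (n = 4 ∧ BIso btw (metricBtw wC4))) := by
  classical
  constructor
  · intro hlin
    have hsym : ∀ x y z : X, btw x y z → btw z y x := fun _ _ _ hh => bP2 hB hh
    have tri : ∀ x y z : X, x ≠ y → x ≠ z → y ≠ z → btw x y z ∨ btw y x z ∨ btw x z y :=
      fun x y z h h' h'' => tri_of_linear hsym hlin h h' h''
    by_cases hconf : ∃ a b c d : X, a ≠ b ∧ a ≠ c ∧ a ≠ d ∧ b ≠ c ∧ b ≠ d ∧ c ≠ d ∧
        btw a b c ∧ btw a d c ∧ btw b a d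
    · obtain ⟨a, b, c, d, hab, hac, had, hbc, hbd, hcd, h1, h2, h3⟩ := hconf
      exact Or.inr (c4_branch hcard hB tri hab hac had hbc hbd hcd h1 h2 h3)
    · exact Or.inl (order_branch hcard hB tri hconf)
  · rintro (h | ⟨-, h⟩)
    · exact linear_of_biso h (linear_pathBtw n)
    · exact linear_of_biso h linear_C4

end FMS
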